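/- Suppose Π ∈ g¹ ⊗̂ m satisfies dΠ = 0, and suppose Φ ∈ g¹ ⊗̂ m satisfies the Kuranishi-type equation Φ = Π − ½ H[Φ,Φ]. Then Φ satisfies the Maurer–Cartan equation dΦ + ½[Φ,Φ] = 0 if and only if P[Φ,Φ] = 0. -/

import Mathlib

open Finset

lemma aux_sum_antidiag_swap {M A : Type*} [AddCommMonoid M] [AddCommMonoid A]
    [HasAntidiagonal A] (k : A) (f : A → A → M) :
    ∑ p ∈ antidiagonal k, f p.1 p.2 = ∑ p ∈ antidiagonal k, f p.2 p.1 := by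
  rw [← Finset.HasAntidiagonal.map_swap_antidiagonal, Finset.sum_map]
  simp

lemma aux_triple_swap_last {M A : Type*} [AddCommMonoid M] [AddCommMonoid A]
    [HasAntidiagonal A] (k : A) (f : A → A → A → M) :
    ∑ p ∈ antidiagonal k, ∑ r ∈ antidiagonal p.1, f r.1 r.2 p.2
      = ∑ p ∈ antidiagonal k, ∑ r ∈ antidiagonal p.1, f r.1 p.2 r.2 := by
  rw [Finset.sum_sigma', Finset.sum_sigma']
  refine Finset.sum_nbij' (fun x => ⟨(x.2.1 + x.1.2, x.2.2), (x.2.1, x.1.2)⟩)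
    (fun x => ⟨(x.2.1 + x.1.2, x.2.2), (x.2.1, x.1.2)⟩) ?_ ?_ ?_ ?_ ?_
  · rintro ⟨⟨p1, p2⟩, ⟨a, b⟩⟩ hx
    simp only [Finset.mem_sigma, Finset.HasAntidiagonal.mem_antidiagonal] at hx ⊢
    obtain ⟨h1, h2⟩ := hx
    exact ⟨by rw [add_assoc, add_comm p2 b, ← add_assoc, h2, h1], trivial⟩
  · rintro ⟨⟨p1, p2⟩, ⟨a, b⟩⟩ hx
    simp only [Finset.mem_sigma, Finset.HasAntidiagonal.mem_antidiagonal] at hx ⊢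
    obtain ⟨h1, h2⟩ := hx
    exact ⟨by rw [add_assoc, add_comm p2 b, ← add_assoc, h2, h1], trivial⟩
  · rintro ⟨⟨p1, p2⟩, ⟨a, b⟩⟩ hx
    simp only [Finset.mem_sigma, Finset.HasAntidiagonal.mem_antidiagonal] at hx
    obtain ⟨h1, h2⟩ := hx
    simp [← h2]
  · rintro ⟨⟨p1, p2⟩, ⟨a, b⟩⟩ hx
    simp only [Finset.mem_sigma, Finset.HasAntidiagonal.mem_antidiagonal] at hx
    obtain ⟨h1, h2⟩ := hx
    simp [← h2]
  · rintro ⟨⟨p1, p2⟩, ⟨a, b⟩⟩ hx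
    rfl


/-- Convolution bracket `[Φ,Φ]` of a formal series with itself. -/
noncomputable def Bsum {Wsp : Type} [AddCommGroup Wsp] [Module ℂ Wsp]
    (br : Wsp →ₗ[ℂ] Wsp →ₗ[ℂ] Wsp) {l : ℕ} (Φ : (Fin l →₀ ℕ) → Wsp)
    (k : Fin l →₀ ℕ) : Wsp :=
  ∑ p ∈ Finset.HasAntidiagonal.antidiagonal k, br (Φ p.1) (Φ p.2)

/-- Let `(g, d, [·,·])` be a ℤ-graded differential graded Lie
algebra over ℂ (modeled as a ℂ-module `Wsp` which is the internal direct sum of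
graded pieces `G : ℤ → Submodule ℂ Wsp`, in which the differential `d`,
homotopy `H`, projection `P` and bracket `br` respect the grading and satisfy
the dgLa axioms together with the homotopy identity `d∘H + H∘d = id − P`).
Extend all operations coefficient-wise (the bracket by convolution) to the
completed tensor product `g ⊗̂ ℂ[[t₁,…,t_l]]`, modeled as formal series
`(Fin l →₀ ℕ) → Wsp`; membership in `g¹ ⊗̂ m` means every coefficient lies in
`G 1` and the constant coefficient vanishes.  Suppose `Pi ∈ g¹ ⊗̂ m` satisfies
`d Pi = 0`, and `Φ ∈ g¹ ⊗̂ m` satisfies the Kuranishi-type equation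
`Φ = Pi − ½ H[Φ,Φ]`.  Then `Φ` satisfies the Maurer–Cartan equation
`dΦ + ½[Φ,Φ] = 0` if and only if `P[Φ,Φ] = 0`. -/
theorem kuranishi_solution_MC_iff_obstruction_vanishes
    (Wsp : Type) [AddCommGroup Wsp] [Module ℂ Wsp]
    (G : ℤ → Submodule ℂ Wsp)
    (hdirect : DirectSum.IsInternal G)
    (d H P : Wsp →ₗ[ℂ] Wsp)
    (br : Wsp →ₗ[ℂ] Wsp →ₗ[ℂ] Wsp)
    -- the operations respect the grading
    (hdeg_d : ∀ i : ℤ, ∀ x ∈ G i, d x ∈ G (i + 1))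
    (hdeg_H : ∀ i : ℤ, ∀ x ∈ G i, H x ∈ G (i - 1))
    (hdeg_P : ∀ i : ℤ, ∀ x ∈ G i, P x ∈ G i)
    (hdeg_br : ∀ i j : ℤ, ∀ x ∈ G i, ∀ y ∈ G j, br x y ∈ G (i + j))
    -- dgLa axioms and the homotopy identity `d∘H + H∘d = id − P`
    (hdd : d ∘ₗ d = 0)
    (hhomotopy : ∀ x : Wsp, d (H x) + H (d x) = x - P x)
    (hskew : ∀ i j : ℤ, ∀ x ∈ G i, ∀ y ∈ G j,
      br x y = -(((-1 : ℂ) ^ (i * j)) • br y x))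
    (hjacobi : ∀ i j k : ℤ, ∀ x ∈ G i, ∀ y ∈ G j, ∀ z ∈ G k,
      br x (br y z) = br (br x y) z + ((-1 : ℂ) ^ (i * j)) • br y (br x z))
    (hleibniz : ∀ i j : ℤ, ∀ x ∈ G i, ∀ y ∈ G j,
      d (br x y) = br (d x) y + ((-1 : ℂ) ^ i) • br x (d y))
    -- the formal variables `t₁, …, t_l`
    (l : ℕ)
    -- `Pi, Φ ∈ g¹ ⊗̂ m`
    (Pi Φ : (Fin l →₀ ℕ) → Wsp)
    (hPideg : ∀ k, Pi k ∈ G 1) (hPim : Pi 0 = 0)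
    (hΦdeg : ∀ k, Φ k ∈ G 1) (hΦm : Φ 0 = 0)
    -- `d Pi = 0`
    (hdPi : ∀ k, d (Pi k) = 0)
    -- the Kuranishi-type equation `Φ = Pi − ½ H [Φ, Φ]`
    (hkuranishi : ∀ k, Φ k = Pi k - (1 / 2 : ℂ) •
      H (∑ p ∈ Finset.HasAntidiagonal.antidiagonal k, br (Φ p.1) (Φ p.2))) :
    -- Maurer–Cartan equation `dΦ + ½[Φ,Φ] = 0` iff `P[Φ,Φ] = 0`
    ((∀ k, d (Φ k) + (1 / 2 : ℂ) •
        (∑ p ∈ Finset.HasAntidiagonal.antidiagonal k, br (Φ p.1) (Φ p.2)) = 0) ↔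
      (∀ k, P (∑ p ∈ Finset.HasAntidiagonal.antidiagonal k, br (Φ p.1) (Φ p.2)) = 0)) := by
  classical
  -- restate with `Bsum`
  have hkur : ∀ k, Φ k = Pi k - (1 / 2 : ℂ) • H (Bsum br Φ k) := hkuranishi
  suffices hmain :
      ((∀ k, d (Φ k) + (1 / 2 : ℂ) • Bsum br Φ k = 0) ↔
        (∀ k, P (Bsum br Φ k) = 0)) from hmain
  -- degree bookkeeping
  have hbr2 : ∀ x ∈ G 1, ∀ y ∈ G 1, br x y ∈ G 2 := by
    intro x hx y hy
    have h := hdeg_br 1 1 x hx y hy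
    norm_num at h
    exact h
  have hskew12 : ∀ x ∈ G 1, ∀ y ∈ G 2, br x y = -br y x := by
    intro x hx y hy
    have h := hskew 1 2 x hx y hy
    norm_num at h
    exact h
  have hsym : ∀ x ∈ G 1, ∀ y ∈ G 1, br x y = br y x := by
    intro x hx y hy
    have h := hskew 1 1 x hx y hy
    norm_num at h
    exact h
  -- degree-1 Jacobi identity
  have hjac1 : ∀ x ∈ G 1, ∀ y ∈ G 1, ∀ z ∈ G 1,
      br (br x y) z + br (br x z) y + br (br y z) x = 0 := by
    intro x hx y hy z hz
    have hj := hjacobi 1 1 1 x hx y hy z hz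
    have e1 : ((-1 : ℂ) ^ ((1 : ℤ) * (1 : ℤ))) = -1 := by norm_num
    rw [e1, neg_one_smul] at hj
    rw [hskew12 x hx _ (hbr2 y hy z hz), hskew12 y hy _ (hbr2 x hx z hz),
      neg_neg] at hj
    rw [← hj, neg_add_cancel]
  -- degree-1 Leibniz
  have hleib1 : ∀ x ∈ G 1, ∀ y ∈ G 1,
      d (br x y) = br (d x) y + br (d y) x := by
    intro x hx y hy
    have hl := hleibniz 1 1 x hx y hy
    have e1 : ((-1 : ℂ) ^ (1 : ℤ)) = -1 := by norm_num
    have hdy : d y ∈ G 2 := by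
      have := hdeg_d 1 y hy
      norm_num at this
      exact this
    rw [e1, neg_one_smul, hskew12 x hx _ hdy, neg_neg] at hl
    exact hl
  -- expansion of `br (Bsum k) y`
  have hBapp : ∀ (k : Fin l →₀ ℕ) (y : Wsp),
      br (Bsum br Φ k) y
        = ∑ r ∈ antidiagonal k, br (br (Φ r.1) (Φ r.2)) y := by
    intro k y
    unfold Bsum
    rw [map_sum, LinearMap.sum_apply]
  -- the Jacobi-sum vanishing
  have hJ : ∀ k : Fin l →₀ ℕ,
      ∑ p ∈ antidiagonal k, br (Bsum br Φ p.1) (Φ p.2) = 0 := by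
    intro k
    set F : (Fin l →₀ ℕ) → (Fin l →₀ ℕ) → (Fin l →₀ ℕ) → Wsp :=
      fun a b c => br (br (Φ a) (Φ b)) (Φ c) with hF
    have expand : ∑ p ∈ antidiagonal k, br (Bsum br Φ p.1) (Φ p.2)
        = ∑ p ∈ antidiagonal k, ∑ r ∈ antidiagonal p.1, F r.1 r.2 p.2 :=
      Finset.sum_congr rfl fun p _ => hBapp p.1 (Φ p.2)
    set S : Wsp := ∑ p ∈ antidiagonal k, ∑ r ∈ antidiagonal p.1, F r.1 r.2 p.2
      with hS
    have hS1 : S = ∑ p ∈ antidiagonal k, ∑ r ∈ antidiagonal p.1, F r.1 p.2 r.2 :=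
      aux_triple_swap_last k F
    have hS2 : (∑ p ∈ antidiagonal k, ∑ r ∈ antidiagonal p.1, F r.2 p.2 r.1)
        = ∑ p ∈ antidiagonal k, ∑ r ∈ antidiagonal p.1, F r.1 p.2 r.2 :=
      Finset.sum_congr rfl fun p _ =>
        aux_sum_antidiag_swap p.1 (fun a b => F b p.2 a)
    have hsum3 : (∑ p ∈ antidiagonal k, ∑ r ∈ antidiagonal p.1,
          (F r.1 r.2 p.2 + F r.1 p.2 r.2 + F r.2 p.2 r.1)) = 0 := by
      apply Finset.sum_eq_zero
      intro p _
      apply Finset.sum_eq_zero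
      intro r _
      exact hjac1 (Φ r.1) (hΦdeg _) (Φ r.2) (hΦdeg _) (Φ p.2) (hΦdeg _)
    have hsplit : (∑ p ∈ antidiagonal k, ∑ r ∈ antidiagonal p.1,
          (F r.1 r.2 p.2 + F r.1 p.2 r.2 + F r.2 p.2 r.1))
        = S + (∑ p ∈ antidiagonal k, ∑ r ∈ antidiagonal p.1, F r.1 p.2 r.2)
          + (∑ p ∈ antidiagonal k, ∑ r ∈ antidiagonal p.1, F r.2 p.2 r.1) := by
      simp [Finset.sum_add_distrib, hS]
    have hzero : S + S + S = 0 := by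
      rw [hsplit] at hsum3
      rw [hS2, ← hS1] at hsum3
      exact hsum3
    have h3 : (3 : ℂ) • S = 0 := by
      rw [show (3 : ℂ) = 1 + 1 + 1 by norm_num, add_smul, add_smul, one_smul]
      exact hzero
    have hS0 : S = 0 := by
      rcases smul_eq_zero.mp h3 with h | h
      · exact absurd h (by norm_num)
      · exact h
    rw [expand]
    exact hS0
  -- `d (Bsum k) = 0` whenever the MC-defect vanishes below `k`
  have hdBzero : ∀ k : Fin l →₀ ℕ,
      (∀ p ∈ antidiagonal k, p.2 ≠ 0 →
        d (Φ p.1) = -((1 / 2 : ℂ) • Bsum br Φ p.1)) →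
      d (Bsum br Φ k) = 0 := by
    intro k hyp
    have hd1 : d (Bsum br Φ k)
        = ∑ p ∈ antidiagonal k,
            (br (d (Φ p.1)) (Φ p.2) + br (d (Φ p.2)) (Φ p.1)) := by
      unfold Bsum
      rw [map_sum]
      exact Finset.sum_congr rfl fun p _ =>
        hleib1 (Φ p.1) (hΦdeg _) (Φ p.2) (hΦdeg _)
    have hsw : (∑ p ∈ antidiagonal k, br (d (Φ p.2)) (Φ p.1))
        = ∑ p ∈ antidiagonal k, br (d (Φ p.1)) (Φ p.2) :=
      aux_sum_antidiag_swap k (fun a b => br (d (Φ b)) (Φ a))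
    have hterm : ∑ p ∈ antidiagonal k, br (d (Φ p.1)) (Φ p.2) = 0 := by
      have heach : ∀ p ∈ antidiagonal k,
          br (d (Φ p.1)) (Φ p.2)
            = -((1 / 2 : ℂ) • br (Bsum br Φ p.1) (Φ p.2)) := by
        intro p hp
        by_cases h0 : p.2 = 0
        · rw [h0, hΦm]
          simp
        · rw [hyp p hp h0]
          simp
      rw [Finset.sum_congr rfl heach, Finset.sum_neg_distrib, ← Finset.smul_sum,
        hJ k, smul_zero, neg_zero]
    rw [hd1, Finset.sum_add_distrib, hsw, hterm]
    simp
  constructor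
  · -- MC ⇒ obstruction vanishes
    intro hMC k
    have hdΦ : ∀ p, d (Φ p) = -((1 / 2 : ℂ) • Bsum br Φ p) := fun p =>
      eq_neg_of_add_eq_zero_left (hMC p)
    have hdB : d (Bsum br Φ k) = 0 := hdBzero k fun p _ _ => hdΦ p.1
    have hhalf : (1 / 2 : ℂ) • H (Bsum br Φ k) = Pi k - Φ k := by
      rw [hkur k]
      abel
    have hdH2 : (1 / 2 : ℂ) • d (H (Bsum br Φ k)) = (1 / 2 : ℂ) • Bsum br Φ k := by
      have hc := congrArg d hhalf
      rw [map_smul, map_sub, hdPi k, hdΦ k, zero_sub, neg_neg] at hc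
      exact hc
    have hdHB : d (H (Bsum br Φ k)) = Bsum br Φ k := by
      have h2 := congrArg (fun x => (2 : ℂ) • x) hdH2
      simp only [smul_smul] at h2
      norm_num at h2
      exact h2
    have hhom := hhomotopy (Bsum br Φ k)
    rw [hdHB, hdB, map_zero, add_zero] at hhom
    have := sub_eq_zero.mpr hhom
    simpa using this
  · -- obstruction vanishes ⇒ MC
    intro hP
    have deg_lt : ∀ (k : Fin l →₀ ℕ), ∀ p ∈ antidiagonal k, p.2 ≠ 0 →
        (p.1.sum fun _ m => m) < (k.sum fun _ m => m) := by
      intro k p hp h0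
      have hadd : k = p.1 + p.2 := (Finset.HasAntidiagonal.mem_antidiagonal.mp hp).symm
      have hpos : 0 < p.2.sum fun _ m => m := by
        rcases Nat.eq_zero_or_pos (p.2.sum fun _ m => m) with hz | hz
        · exfalso
          apply h0
          ext i
          by_contra hi
          have hmem : i ∈ p.2.support := Finsupp.mem_support_iff.mpr (by simpa using hi)
          have := Finset.sum_eq_zero_iff.mp hz i hmem
          simp at this hi
          exact hi this
        · exact hz
      have hsum : (k.sum fun _ m => m)
          = (p.1.sum fun _ m => m) + (p.2.sum fun _ m => m) := by
        rw [hadd]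
        exact Finsupp.sum_add_index' (fun _ => rfl) (fun _ _ _ => rfl)
      omega
    have key : ∀ n : ℕ, ∀ k : Fin l →₀ ℕ, (k.sum fun _ m => m) < n →
        d (Φ k) = -((1 / 2 : ℂ) • Bsum br Φ k) := by
      intro n
      induction n with
      | zero => exact fun k hk => absurd hk (Nat.not_lt_zero _)
      | succ n ih =>
        intro k hk
        have hdB : d (Bsum br Φ k) = 0 := by
          apply hdBzero k
          intro p hp h0
          exact ih p.1 (lt_of_lt_of_le (deg_lt k p hp h0) (Nat.lt_succ_iff.mp hk))
        have hhom := hhomotopy (Bsum br Φ k)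
        rw [hdB, map_zero, add_zero, hP k, sub_zero] at hhom
        have hc := congrArg d (hkur k)
        rw [map_sub, map_smul, hdPi k, hhom, zero_sub] at hc
        exact hc
    intro k
    rw [key ((k.sum fun _ m => m) + 1) k (Nat.lt_succ_self _), neg_add_cancel]
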